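/- Let r > 0 be fixed and let g : ℝ² → ℂ be the spherical wave g(x) = exp(2πi r ‖x‖). Then for every x ∈ ℝ² the limit lim_{R→∞} (1/(πR²)) ∫_{B_R} g(y) · conj(g(y − x)) dy exists and equals ∑_{m=0}^∞ (−1)^m (π r ‖x‖)^{2m} / (m!)², i.e. the Bessel function J₀(2π r ‖x‖). -/

import Mathlib

open MeasureTheory Filter Complex Set
open scoped Real Topology

noncomputable section AutocorrAux

lemma div_helper' (A : ℂ) (p q : ℝ) (hp : (p:ℂ) ≠ 0) (hq : (q:ℂ) ≠ 0) :
    A / ((p * q^2 : ℝ) : ℂ) = ((q^2)⁻¹ • A) / (p : ℂ) := by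
  rw [Complex.real_smul]
  push_cast
  field_simp


lemma expIntInt (m : ℤ) :
    ∫ θ in (0:ℝ)..(2*π), Complex.exp (m * Complex.I * θ) =
      if m = 0 then (2*π : ℂ) else 0 := by
  split_ifs with h
  · simp [h]
  · have hc : (m : ℂ) * Complex.I ≠ 0 := by
      simp [Complex.ext_iff, h, Complex.I_ne_zero]
    rw [integral_exp_mul_complex hc]
    have : Complex.exp ((m:ℂ) * Complex.I * (2*π)) = 1 := by
      have := Complex.exp_int_mul_two_pi_mul_I m
      rw [← this]; ring_nf
    simp [this]

lemma cosPowInt (n : ℕ) :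
    ∫ θ in (0:ℝ)..(2*π), ((Real.cos θ : ℂ))^n =
      if 2 ∣ n then (2*π * (n.choose (n/2)) / 2^n : ℂ) else 0 := by
  have hcos : ∀ θ : ℝ, ((Real.cos θ : ℂ)) =
      (Complex.exp (Complex.I * θ) + Complex.exp (-Complex.I * θ)) / 2 := by
    intro θ
    rw [Complex.ofReal_cos]
    show Complex.cos θ = _
    rw [Complex.cos]
    ring_nf
  have key : ∀ θ : ℝ, ((Real.cos θ : ℂ))^n =
      ∑ k ∈ Finset.range (n+1),
        (n.choose k : ℂ) / 2^n * Complex.exp ((2*(k:ℤ) - n) * Complex.I * θ) := by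
    intro θ
    rw [hcos, div_pow, add_pow]
    rw [Finset.sum_div]
    refine Finset.sum_congr rfl fun k hk => ?_
    rw [← Complex.exp_nat_mul, ← Complex.exp_nat_mul, ← Complex.exp_add]
    have : (k:ℂ) * (Complex.I * θ) + (n - k : ℕ) * (-Complex.I * θ)
        = (2*(k:ℤ) - n) * Complex.I * θ := by
      have hk' : (k:ℝ) ≤ n := by exact_mod_cast Nat.le_of_lt_succ (Finset.mem_range.mp hk)
      push_cast [Nat.cast_sub (Nat.le_of_lt_succ (Finset.mem_range.mp hk))]
      ring
    rw [this]; ring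
  rw [intervalIntegral.integral_congr (fun θ _ => key θ)]
  rw [intervalIntegral.integral_finset_sum (fun k _ => by
    apply Continuous.intervalIntegrable
    fun_prop)]
  have term : ∀ k ∈ Finset.range (n+1),
      (∫ θ in (0:ℝ)..(2*π), (n.choose k : ℂ) / 2^n * Complex.exp ((2*(k:ℤ) - n) * Complex.I * θ))
        = (n.choose k : ℂ) / 2^n * (if 2*(k:ℤ) - n = 0 then (2*π:ℂ) else 0) := by
    intro k _
    rw [intervalIntegral.integral_const_mul]
    congr 1
    exact_mod_cast expIntInt (2*(k:ℤ) - n)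
  rw [Finset.sum_congr rfl term]
  split_ifs with h
  · obtain ⟨m, rfl⟩ := h
    rw [Finset.sum_eq_single m]
    · simp; ring
    · intro k hk hkm
      have : ¬ (2*(k:ℤ) - 2*m = 0) := by omega
      simp [this]
    · intro hm; exfalso; apply hm; simp; omega
  · apply Finset.sum_eq_zero
    intro k _
    have : ¬ (2*(k:ℤ) - n = 0) := by omega
    simp [this]


lemma expCosInt (b : ℝ) :
    ∫ θ in (0:ℝ)..(2*π), Complex.exp (b * Complex.I * Real.cos θ) =
      2*π * ((∑' m : ℕ, (-1)^m * (b/2)^(2*m) / ((Nat.factorial m : ℝ))^2 : ℝ) : ℂ) := by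
  have h2π : (0:ℝ) ≤ 2*π := by positivity
  -- pointwise series expansion
  have hexp : ∀ θ : ℝ, Complex.exp (b * Complex.I * Real.cos θ)
      = ∑' n : ℕ, (b * Complex.I * Real.cos θ)^n / n.factorial := by
    intro θ
    rw [Complex.exp_eq_exp_ℂ, NormedSpace.exp_eq_tsum_div]
  rw [intervalIntegral.integral_of_le h2π]
  simp_rw [hexp]
  -- swap integral and sum
  rw [← MeasureTheory.integral_tsum_of_summable_integral_norm]
  · -- compute each term's integral
    have hterm : ∀ n : ℕ, (∫ θ in Set.Ioc (0:ℝ) (2*π), (b * Complex.I * Real.cos θ)^n / n.factorial)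
        = (b*Complex.I)^n / n.factorial *
            (if 2 ∣ n then (2*π * (n.choose (n/2)) / 2^n : ℂ) else 0) := by
      intro n
      rw [← cosPowInt n, intervalIntegral.integral_of_le h2π, ← integral_const_mul]
      congr 1 with θ
      ring
    rw [tsum_congr hterm]
    -- reindex over even numbers
    have hinj : Function.Injective (fun m : ℕ => 2*m) := fun a b h => by
      simp only at h; omega
    rw [← Function.Injective.tsum_eq hinj]
    · rw [Complex.ofReal_tsum, ← tsum_mul_left]
      congr 1 with m
      have hId : ((2:ℕ) ∣ 2*m) := ⟨m, rfl⟩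
      simp only [hId, if_true]
      have h4 : ((2:ℂ))^(2*m) = 4^m := by rw [pow_mul]; norm_num
      have hI : (Complex.I)^(2*m) = (-1)^m := by rw [pow_mul, Complex.I_sq]
      have hfac : ((2*m).factorial : ℂ) ≠ 0 := by exact_mod_cast (Nat.factorial_pos _).ne'
      have hfacm : ((m.factorial : ℂ)) ≠ 0 := by exact_mod_cast (Nat.factorial_pos _).ne'
      have hch' : ((2*m).choose m : ℂ) * ((m.factorial : ℂ) * m.factorial) = (2*m).factorial := by
        have key := Nat.choose_mul_factorial_mul_factorial (show m ≤ 2*m by omega)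
        rw [show 2*m-m = m from by omega] at key
        push_cast [← key]
        ring
      have hmn : (2*m)/2 = m := by omega
      rw [hmn]
      rw [mul_pow, hI]
      push_cast
      field_simp
      have h12 : ((1:ℂ)/2)^(m*2) * 2^(m*2) = 1 := by rw [← mul_pow]; norm_num
      linear_combination (b:ℂ)^(2*m) * hch' - (b:ℂ)^(2*m) * ((2*m).factorial : ℂ) * h12
    · -- support of the function is contained in even numbers
      intro n hn
      simp only [Function.mem_support] at hn
      by_contra hmem
      apply hn
      have : ¬ (2 ∣ n) := by
        intro ⟨k, hk⟩
        exact hmem ⟨k, by simp [hk]⟩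
      simp [this]
  · -- integrability of each term
    intro n
    apply Continuous.integrableOn_Ioc
    fun_prop
  · -- summability of integrals of norms
    apply Summable.of_nonneg_of_le (fun n => integral_nonneg (fun θ => norm_nonneg _))
      (fun n => ?_) (((Real.summable_pow_div_factorial |b|).mul_left (2*π)))
    have hb : ∀ θ : ℝ, ‖((b : ℂ) * Complex.I * Real.cos θ)^n / n.factorial‖ ≤ |b|^n / n.factorial := by
      intro θ
      rw [norm_div, norm_pow]
      have h2 : ‖((n.factorial : ℂ))‖ = (n.factorial : ℝ) := by simp
      rw [h2]
      have h1 : ‖(b:ℂ) * Complex.I * (Real.cos θ:ℂ)‖ ≤ |b| := by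
        simp only [norm_mul, Complex.norm_real, Complex.norm_I, Real.norm_eq_abs, mul_one]
        exact mul_le_of_le_one_right (abs_nonneg b) (Real.abs_cos_le_one θ)
      gcongr
    calc ∫ θ in Set.Ioc (0:ℝ) (2*π), ‖(b * Complex.I * Real.cos θ)^n / n.factorial‖
        ≤ ∫ θ in Set.Ioc (0:ℝ) (2*π), |b|^n / n.factorial := by
          apply setIntegral_mono_on
          · apply Continuous.integrableOn_Ioc; fun_prop
          · exact integrableOn_const measure_Ioc_lt_top.ne
          · exact measurableSet_Ioc
          · exact fun θ _ => hb θ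
      _ = 2*π * (|b|^n / n.factorial) := by
          rw [setIntegral_const, Real.volume_real_Ioc_of_le h2π, smul_eq_mul]
          ring


lemma diskInt (c s φ : ℝ) :
    (∫ w in Metric.closedBall (0:ℂ) 1,
        Complex.exp (c * Complex.I *
          ((s*Real.cos φ * w.re + s*Real.sin φ * w.im) / ‖w‖)))
      = π * ((∑' m : ℕ, (-1)^m * (c*s/2)^(2*m) / ((Nat.factorial m : ℝ))^2 : ℝ) : ℂ) := by
  set F : ℂ → ℂ := fun w => Complex.exp (c * Complex.I *
          ((s*Real.cos φ * w.re + s*Real.sin φ * w.im) / ‖w‖)) with hF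
  have h1 : (∫ w in Metric.closedBall (0:ℂ) 1, F w)
      = ∫ w, (Metric.closedBall (0:ℂ) 1).indicator F w :=
    (integral_indicator (measurableSet_closedBall)).symm
  rw [h1, ← Complex.integral_comp_polarCoord_symm]
  have h2 : ∀ p ∈ polarCoord.target,
      p.1 • (Metric.closedBall (0:ℂ) 1).indicator F (Complex.polarCoord.symm p)
      = (Set.Ioc (0:ℝ) 1 ×ˢ Set.Ioo (-π) π).indicator
          (fun q => (q.1:ℂ) * Complex.exp (c * Complex.I * (s * Real.cos (q.2 - φ)))) p := by
    rintro ⟨ρ, θ⟩ ⟨hρ, hθ⟩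
    simp only [Set.mem_Ioi] at hρ
    have habs : ‖Complex.polarCoord.symm (ρ, θ)‖ = ρ := by
      rw [Complex.norm_polarCoord_symm, abs_of_pos hρ]
    have hre : (Complex.polarCoord.symm (ρ, θ)).re = ρ * Real.cos θ := by
      simp [Complex.cos_ofReal_re, Complex.sin_ofReal_re]
    have him : (Complex.polarCoord.symm (ρ, θ)).im = ρ * Real.sin θ := by
      simp [Complex.cos_ofReal_im, Complex.sin_ofReal_im, Complex.cos_ofReal_re, Complex.sin_ofReal_re]
    have hmem : Complex.polarCoord.symm (ρ, θ) ∈ Metric.closedBall (0:ℂ) 1 ↔ ρ ≤ 1 := by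
      rw [Metric.mem_closedBall, dist_zero_right, habs]
    have harg : F (Complex.polarCoord.symm (ρ, θ))
        = Complex.exp (c * Complex.I * (s * Real.cos (θ - φ))) := by
      rw [hF]
      simp only [hre, him, habs]
      have key : (s*Real.cos φ * (ρ * Real.cos θ) + s*Real.sin φ * (ρ * Real.sin θ)) / ρ
          = s * Real.cos (θ - φ) := by
        rw [Real.cos_sub]; field_simp
      congr 2
      exact_mod_cast key
    by_cases hle : ρ ≤ 1
    · rw [Set.indicator_of_mem (hmem.mpr hle), Set.indicator_of_mem
        (by exact ⟨⟨hρ, hle⟩, hθ⟩), harg]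
      simp [smul_eq_mul]
    · rw [Set.indicator_of_notMem (fun h => hle (hmem.mp h)),
        Set.indicator_of_notMem (fun h => hle h.1.2)]
      simp
  rw [setIntegral_congr_fun polarCoord.open_target.measurableSet h2]
  rw [setIntegral_indicator ((measurableSet_Ioc.prod measurableSet_Ioo))]
  have h3 : polarCoord.target ∩ (Set.Ioc (0:ℝ) 1 ×ˢ Set.Ioo (-π) π)
      = Set.Ioc (0:ℝ) 1 ×ˢ Set.Ioo (-π) π := by
    apply Set.inter_eq_self_of_subset_right
    intro p hp
    exact ⟨Set.Ioc_subset_Ioi_self hp.1, hp.2⟩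
  rw [h3, MeasureTheory.Measure.volume_eq_prod, setIntegral_prod_mul (fun ρ : ℝ => (ρ:ℂ))
    (fun θ : ℝ => Complex.exp (c * Complex.I * (s * Real.cos (θ - φ)))) _ _]
  have h4 : (∫ ρ in Set.Ioc (0:ℝ) 1, (ρ:ℂ)) = (1/2 : ℂ) := by
    rw [← intervalIntegral.integral_of_le zero_le_one]
    rw [intervalIntegral.integral_ofReal]
    norm_num
  have h5 : (∫ θ in Set.Ioo (-π) π, Complex.exp (c * Complex.I * (s * Real.cos (θ - φ))))
      = 2*π * ((∑' m : ℕ, (-1)^m * (c*s/2)^(2*m) / ((Nat.factorial m : ℝ))^2 : ℝ) : ℂ) := by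
    rw [← integral_Ioc_eq_integral_Ioo, ← intervalIntegral.integral_of_le (by linarith [Real.pi_pos] : -π ≤ π)]
    rw [intervalIntegral.integral_comp_sub_right (fun u => Complex.exp (c * Complex.I * (s * Real.cos u))) φ]
    have hper : Function.Periodic (fun u => Complex.exp (c * Complex.I * (s * Real.cos u))) (2*π) :=
      fun u => by simp [Real.cos_add_two_pi]
    have := hper.intervalIntegral_add_eq (-π - φ) 0
    rw [show -π - φ + 2*π = π - φ by ring] at this
    rw [this, zero_add]
    have := expCosInt (c*s)
    rw [← this]
    congr 1 with θ
    congr 1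
    push_cast
    ring
  rw [h4, h5]
  ring


noncomputable def T2 : EuclideanSpace ℝ (Fin 2) ≃ᵐ ℂ :=
  (MeasurableEquiv.toLp 2 (Fin 2 → ℝ)).symm.trans
    (MeasurableEquiv.finTwoArrow.trans Complex.measurableEquivRealProd.symm)

lemma T2_mp : MeasurePreserving (T2 : EuclideanSpace ℝ (Fin 2) → ℂ) volume volume :=
  ((EuclideanSpace.volume_preserving_symm_measurableEquiv_toLp (Fin 2)).trans
    (volume_preserving_finTwoArrow ℝ)).trans Complex.volume_preserving_equiv_real_prod.symm

lemma T2_re (z : EuclideanSpace ℝ (Fin 2)) : (T2 z).re = z 0 := rfl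
lemma T2_im (z : EuclideanSpace ℝ (Fin 2)) : (T2 z).im = z 1 := rfl

lemma T2_abs (z : EuclideanSpace ℝ (Fin 2)) : ‖T2 z‖ = ‖z‖ := by
  rw [Complex.norm_def, Complex.normSq_apply, T2_re, T2_im, EuclideanSpace.norm_eq]
  simp [Fin.sum_univ_two, sq_abs, sq]

lemma ballInt (c : ℝ) (x : EuclideanSpace ℝ (Fin 2)) :
    (∫ z in Metric.closedBall (0 : EuclideanSpace ℝ (Fin 2)) 1,
        Complex.exp (c * Complex.I * (((inner ℝ x z : ℝ)) / ‖z‖)))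
      = π * ((∑' m : ℕ, (-1)^m * (c*‖x‖/2)^(2*m) / ((Nat.factorial m : ℝ))^2 : ℝ) : ℂ) := by
  set w : ℂ := T2 x with hw
  have hs : ‖w‖ = ‖x‖ := T2_abs x
  have hx0 : ‖x‖ * Real.cos w.arg = x 0 := by
    rw [← hs]; exact Complex.norm_mul_cos_arg w
  have hx1 : ‖x‖ * Real.sin w.arg = x 1 := by
    rw [← hs]; exact Complex.norm_mul_sin_arg w
  have hball : Metric.closedBall (0 : EuclideanSpace ℝ (Fin 2)) 1
      = T2 ⁻¹' (Metric.closedBall (0:ℂ) 1) := by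
    ext z
    simp [Metric.mem_closedBall, dist_zero_right, T2_abs]
  have hpt : ∀ z : EuclideanSpace ℝ (Fin 2),
      Complex.exp (c * Complex.I * (((inner ℝ x z : ℝ)) / ‖z‖))
      = Complex.exp (c * Complex.I *
          ((‖x‖*Real.cos w.arg * (T2 z).re + ‖x‖*Real.sin w.arg * (T2 z).im)
            / ‖T2 z‖)) := by
    intro z
    have key : (inner ℝ x z : ℝ) = ‖x‖*Real.cos w.arg * z 0 + ‖x‖*Real.sin w.arg * z 1 := by
      rw [PiLp.inner_apply]
      simp only [RCLike.inner_apply, conj_trivial, Fin.sum_univ_two]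
      rw [hx0, hx1]; ring
    rw [T2_abs, T2_re, T2_im, key]
    congr 1
    push_cast
    ring
  rw [hball]
  simp_rw [hpt]
  rw [T2_mp.setIntegral_preimage_emb T2.measurableEmbedding
    (fun u : ℂ => Complex.exp (c * Complex.I *
      ((‖x‖*Real.cos w.arg * u.re + ‖x‖*Real.sin w.arg * u.im) / ‖u‖)))
    (Metric.closedBall (0:ℂ) 1)]
  rw [diskInt c ‖x‖ w.arg]


lemma normlim (x z : EuclideanSpace ℝ (Fin 2)) (hz : z ≠ 0) :
    Tendsto (fun R : ℝ => ‖R • z‖ - ‖R • z - x‖) atTop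
      (𝓝 ((inner ℝ x z : ℝ) / ‖z‖)) := by
  have hz' : (0:ℝ) < ‖z‖ := norm_pos_iff.mpr hz
  have heq : ∀ᶠ R in atTop, ‖R • z‖ - ‖R • z - x‖
      = (2*(inner ℝ x z : ℝ) - ‖x‖^2/R) / (‖z‖ + ‖z - R⁻¹ • x‖) := by
    filter_upwards [eventually_gt_atTop 0] with R hR
    have ha : ‖R • z‖ = R * ‖z‖ := by
      rw [norm_smul, Real.norm_eq_abs, abs_of_pos hR]
    have hb : ‖R • z - x‖ = R * ‖z - R⁻¹ • x‖ := by
      rw [show R • z - x = R • (z - R⁻¹ • x) by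
        rw [smul_sub, smul_inv_smul₀ hR.ne']]
      rw [norm_smul, Real.norm_eq_abs, abs_of_pos hR]
    have hD : (0:ℝ) < ‖z‖ + ‖z - R⁻¹ • x‖ := by positivity
    have sqid : (‖R • z‖ - ‖R • z - x‖) * (‖R • z‖ + ‖R • z - x‖)
        = 2*R*(inner ℝ x z : ℝ) - ‖x‖^2 := by
      have expand : ‖R • z - x‖^2 = ‖R • z‖^2 - 2 * (inner ℝ (R • z) x : ℝ) + ‖x‖^2 :=
        norm_sub_sq_real (R • z) x
      have hin : (inner ℝ (R • z) x : ℝ) = R * (inner ℝ z x : ℝ) := real_inner_smul_left z x R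
      have hid : (‖R • z‖ - ‖R • z - x‖) * (‖R • z‖ + ‖R • z - x‖)
          = ‖R • z‖^2 - ‖R • z - x‖^2 := by ring
      rw [hid, expand, hin, show (inner ℝ z x : ℝ) = inner ℝ x z from (real_inner_comm z x).symm]
      ring
    rw [eq_div_iff hD.ne']
    have hsum : ‖R • z‖ + ‖R • z - x‖ = R * (‖z‖ + ‖z - R⁻¹ • x‖) := by
      rw [ha, hb]; ring
    have hRne : R ≠ 0 := hR.ne'
    apply mul_right_cancel₀ hRne
    rw [mul_assoc, mul_comm (‖z‖ + ‖z - R⁻¹ • x‖) R, ← hsum, sqid, sub_mul,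
      div_mul_cancel₀ _ hRne]
    ring
  rw [tendsto_congr' heq]
  have hnum : Tendsto (fun R : ℝ => 2*(inner ℝ x z : ℝ) - ‖x‖^2/R) atTop
      (𝓝 (2*(inner ℝ x z : ℝ) - 0)) := by
    apply tendsto_const_nhds.sub
    have := tendsto_inv_atTop_zero.const_mul (‖x‖^2)
    rw [mul_zero] at this
    exact this.congr (fun R => (div_eq_mul_inv _ _).symm)
  have hden : Tendsto (fun R : ℝ => ‖z‖ + ‖z - R⁻¹ • x‖) atTop
      (𝓝 (‖z‖ + ‖z‖)) := by
    apply tendsto_const_nhds.add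
    have h1 : Tendsto (fun R : ℝ => z - R⁻¹ • x) atTop (𝓝 (z - (0:ℝ) • x)) :=
      tendsto_const_nhds.sub (tendsto_inv_atTop_zero.smul_const x)
    simpa using h1.norm
  have := hnum.div hden (by positivity)
  convert this using 2
  · rfl
  rw [sub_zero]
  field_simp
  ring


end AutocorrAux

open MeasureTheory Filter
open scoped Topology

/-- The natural autocorrelation of the planar spherical wave `exp(2πi r ‖x‖)` exists
and equals `J₀(2πr‖x‖)`, expressed via the power series of `J₀`. -/
theorem autocorrelation_spherical_wave_plane
    (r : ℝ) (hr : 0 < r)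
    (g : EuclideanSpace ℝ (Fin 2) → ℂ)
    (hg : ∀ x, g x = Complex.exp (2 * Real.pi * Complex.I * r * ‖x‖)) :
    ∀ x : EuclideanSpace ℝ (Fin 2),
      Tendsto
        (fun R : ℝ =>
          (∫ y in Metric.closedBall (0 : EuclideanSpace ℝ (Fin 2)) R,
              g y * (starRingEnd ℂ) (g (y - x))) /
            ((Real.pi * R ^ 2 : ℝ) : ℂ))
        atTop
        (𝓝 ((∑' m : ℕ, (-1) ^ m * (Real.pi * r * ‖x‖) ^ (2 * m) /
              ((Nat.factorial m : ℝ) ^ 2) : ℝ) : ℂ)) := by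
  intro x
  set c : ℝ := 2*π*r with hc
  have hπ0 : (↑π : ℂ) ≠ 0 := by exact_mod_cast Real.pi_ne_zero
  have hh : ∀ y : EuclideanSpace ℝ (Fin 2), g y * (starRingEnd ℂ) (g (y - x))
      = Complex.exp (↑c * Complex.I * ↑(‖y‖ - ‖y - x‖)) := by
    intro y
    rw [hg, hg, ← Complex.exp_conj, ← Complex.exp_add]
    congr 1
    simp only [map_mul, Complex.conj_I, Complex.conj_ofReal, map_ofNat]
    rw [hc]
    push_cast
    ring
  have hnorm1 : ∀ t : ℝ, ‖Complex.exp (↑c * Complex.I * ↑t)‖ = 1 := by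
    intro t
    rw [Complex.norm_exp]
    simp
  set F : ℝ → EuclideanSpace ℝ (Fin 2) → ℂ :=
    fun R z => Complex.exp (↑c * Complex.I * ↑(‖R • z‖ - ‖R • z - x‖)) with hFdef
  set L : EuclideanSpace ℝ (Fin 2) → ℂ :=
    fun z => Complex.exp (↑c * Complex.I * ↑((inner ℝ x z : ℝ) / ‖z‖)) with hLdef
  have hcont : Continuous fun t : ℝ => Complex.exp (↑c * Complex.I * ↑t) := by
    fun_prop
  have hmain : Tendsto (fun R => ∫ z in Metric.closedBall (0 : EuclideanSpace ℝ (Fin 2)) 1, F R z)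
      atTop (𝓝 (∫ z in Metric.closedBall (0 : EuclideanSpace ℝ (Fin 2)) 1, L z)) := by
    apply tendsto_integral_filter_of_dominated_convergence (fun _ => (1:ℝ))
    · filter_upwards with R
      apply Continuous.aestronglyMeasurable
      apply hcont.comp
      fun_prop
    · filter_upwards with R
      filter_upwards with z
      exact le_of_eq (hnorm1 _)
    · exact integrableOn_const measure_closedBall_lt_top.ne
    · have h0 : ∀ᵐ z : EuclideanSpace ℝ (Fin 2)
          ∂(volume.restrict (Metric.closedBall (0 : EuclideanSpace ℝ (Fin 2)) 1)), z ≠ 0 := by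
        apply ae_restrict_of_ae
        rw [MeasureTheory.ae_iff]
        have hset : {a : EuclideanSpace ℝ (Fin 2) | ¬ a ≠ 0} = {0} := by
          ext z; simp
        rw [hset]
        exact measure_singleton 0
      filter_upwards [h0] with z hz
      exact (hcont.tendsto _).comp (normlim x z hz)
  have hval : (∫ z in Metric.closedBall (0 : EuclideanSpace ℝ (Fin 2)) 1, L z)
      = ↑π * ((∑' m : ℕ, (-1)^m * (π*r*‖x‖)^(2*m) / ((Nat.factorial m : ℝ))^2 : ℝ) : ℂ) := by
    have hb : (∫ z in Metric.closedBall (0 : EuclideanSpace ℝ (Fin 2)) 1, L z)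
        = ∫ z in Metric.closedBall (0 : EuclideanSpace ℝ (Fin 2)) 1,
            Complex.exp (↑c * Complex.I * ((↑(inner ℝ x z : ℝ)) / (↑‖z‖ : ℂ))) := by
      apply setIntegral_congr_fun measurableSet_closedBall
      intro z _
      rw [hLdef]
      push_cast
      ring_nf
    rw [hb, ballInt c x, show c*‖x‖/2 = π*r*‖x‖ by rw [hc]; ring]
  have hev : ∀ᶠ R in atTop,
      (∫ y in Metric.closedBall (0 : EuclideanSpace ℝ (Fin 2)) R,
          g y * (starRingEnd ℂ) (g (y - x))) / ((π * R ^ 2 : ℝ) : ℂ)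
      = (∫ z in Metric.closedBall (0 : EuclideanSpace ℝ (Fin 2)) 1, F R z) / (↑π : ℂ) := by
    filter_upwards [eventually_gt_atTop 0] with R hR
    have h1 : (∫ y in Metric.closedBall (0 : EuclideanSpace ℝ (Fin 2)) R,
        g y * (starRingEnd ℂ) (g (y - x)))
        = ∫ y in Metric.closedBall (0 : EuclideanSpace ℝ (Fin 2)) R,
            Complex.exp (↑c * Complex.I * ↑(‖y‖ - ‖y - x‖)) :=
      setIntegral_congr_fun measurableSet_closedBall (fun y _ => hh y)
    have h2 : (∫ z in Metric.closedBall (0 : EuclideanSpace ℝ (Fin 2)) 1, F R z)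
        = ((R : ℝ) ^ 2)⁻¹ • ∫ y in Metric.closedBall (0 : EuclideanSpace ℝ (Fin 2)) R,
            Complex.exp (↑c * Complex.I * ↑(‖y‖ - ‖y - x‖)) := by
      have key := MeasureTheory.Measure.setIntegral_comp_smul_of_pos (μ := volume)
        (fun y : EuclideanSpace ℝ (Fin 2) => Complex.exp (↑c * Complex.I * ↑(‖y‖ - ‖y - x‖)))
        (Metric.closedBall (0 : EuclideanSpace ℝ (Fin 2)) 1) hR
      rw [finrank_euclideanSpace_fin, smul_unitClosedBall_of_nonneg hR.le] at key
      exact key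
    rw [h1, h2]
    have hR2 : ((R:ℂ)) ≠ 0 := by exact_mod_cast hR.ne'
    exact div_helper' _ π R hπ0 hR2
  apply Tendsto.congr' (by filter_upwards [hev] with R h using h.symm)
  have hfin := hmain.div_const (↑π : ℂ)
  rw [hval, mul_div_cancel_left₀ _ hπ0] at hfin
  exact hfin
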